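/- Let (C, ⊗, I) be a small strict tensor category which is k-linear abelian, and let (F, Id_I, F₂) be a k-linear tensor functor F : C → Vect_k^f with all F(X) finite-dimensional, where F₂ : F(X) ⊗ F(Y) → F(X ⊗ Y) are the natural coherence isomorphisms. Fix a realization {i_X} of Coend(F) and write S̄ = i_X(S). Define m : Coend(F) ⊗ Coend(F) → Coend(F) by m(S̄ ⊗ T̄) = i_{X⊗Y}(F₂ ∘ (S ⊗ T) ∘ F₂^{-1}) for S ∈ End_k(F(X)), T ∈ End_k(F(Y)), and η : k → Coend(F) by η = i_I (identifying Hom_k(F(I),F(I)) = Hom_k(k,k) = k). Then m is well-defined and associative with unit η, and (Coend(F), Δ, ε, m, η) is a bialgebra, where (Δ, ε) is the coalgebra structure induced from the comatrix coalgebras. -/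

import Mathlib

open CategoryTheory TensorProduct MonoidalCategory Functor.LaxMonoidal Functor.OplaxMonoidal

noncomputable section
universe w₁ w₂ u
variable (k : Type) [Field k]

def smulRightL {M : Type} [AddCommGroup M] [Module k M] (x : M) :
    (M →ₗ[k] k) →ₗ[k] (M →ₗ[k] M) where
  toFun f := f.smulRight x
  map_add' f g := by ext y; simp [add_smul]
  map_smul' c f := by ext y; simp [smul_smul]

/-- The comatrix comultiplication on `Hom_k(M,M)`; the counit is the trace. -/
def comatrixComul (M : Type) [AddCommGroup M] [Module k M] [Module.Finite k M] :
    (M →ₗ[k] M) →ₗ[k] ((M →ₗ[k] M) ⊗[k] (M →ₗ[k] M)) :=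
  let b := Module.Free.chooseBasis k M
  ∑ i, ∑ l,
    ((TensorProduct.mk k (M →ₗ[k] M) (M →ₗ[k] M)).flip ((b.coord l).smulRight (b i))) ∘ₗ
      (smulRightL k (b l)) ∘ₗ (LinearMap.llcomp k M M k (b.coord i))

namespace CoendAux

variable {k} {M : Type} [AddCommGroup M] [Module k M]

/-- elementary endomorphism attached to a basis: `EEb c p q = x ↦ (coord q x) • c p`. -/
def EEb {ι : Type} (c : Module.Basis ι k M) (p q : ι) : M →ₗ[k] M := (c.coord q).smulRight (c p)

lemma EEb_apply {ι : Type} (c : Module.Basis ι k M) (p q : ι) (x : M) :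
    EEb c p q x = c.repr x q • c p := by simp [EEb]

variable [FiniteDimensional k M]

lemma dth_sigma {ι : Type} [Fintype ι] (c : Module.Basis ι k M) :
    dualTensorHom k M M (∑ p, c.coord p ⊗ₜ[k] c p) = LinearMap.id := by
  ext x
  simp [map_sum, dualTensorHom_apply, Module.Basis.sum_repr]

lemma sigma_indep {ι ι' : Type} [Fintype ι] [Fintype ι'] (c : Module.Basis ι k M) (c' : Module.Basis ι' k M) :
    (∑ p, c.coord p ⊗ₜ[k] c p) = ∑ p, c'.coord p ⊗ₜ[k] c' p := by
  classical
  have h1 := dualTensorHomEquivOfBasis_symm_cancel_left (N := M) c (∑ p, c.coord p ⊗ₜ[k] c p)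
  have h2 := dualTensorHomEquivOfBasis_symm_cancel_left (N := M) c (∑ p, c'.coord p ⊗ₜ[k] c' p)
  rw [dth_sigma] at h1 h2
  rw [← h1, ← h2]

/-- the canonical element `τ_c = ∑ E_{qp} ⊗ E_{pq}` is basis independent. -/
lemma tau_indep {ι ι' : Type} [Fintype ι] [Fintype ι'] (c : Module.Basis ι k M) (c' : Module.Basis ι' k M) :
    (∑ p, ∑ q, EEb c q p ⊗ₜ[k] EEb c p q) = ∑ p, ∑ q, EEb c' q p ⊗ₜ[k] EEb c' p q := by
  set dth := dualTensorHom k M M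
  set G : ((Module.Dual k M ⊗[k] M) ⊗[k] (Module.Dual k M ⊗[k] M)) →ₗ[k]
      ((M →ₗ[k] M) ⊗[k] (M →ₗ[k] M)) :=
    (TensorProduct.map dth dth) ∘ₗ
      (tensorTensorTensorComm k (Module.Dual k M) M (Module.Dual k M) M).symm.toLinearMap ∘ₗ
      (TensorProduct.map LinearMap.id (TensorProduct.comm k M M).toLinearMap) ∘ₗ
      (tensorTensorTensorComm k (Module.Dual k M) M (Module.Dual k M) M).toLinearMap
  have hG : ∀ {ι₀ : Type} [Fintype ι₀] (c₀ : Module.Basis ι₀ k M),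
      G ((∑ p, c₀.coord p ⊗ₜ[k] c₀ p) ⊗ₜ[k] (∑ p, c₀.coord p ⊗ₜ[k] c₀ p))
        = ∑ p, ∑ q, EEb c₀ q p ⊗ₜ[k] EEb c₀ p q := by
    intro ι₀ _ c₀
    rw [TensorProduct.sum_tmul]
    rw [map_sum]
    refine Finset.sum_congr rfl fun p _ => ?_
    rw [TensorProduct.tmul_sum, map_sum]
    refine Finset.sum_congr rfl fun q _ => ?_
    simp only [G, LinearMap.comp_apply, LinearEquiv.coe_coe, tensorTensorTensorComm_tmul,
      TensorProduct.map_tmul, LinearMap.id_apply, TensorProduct.comm_tmul,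
      tensorTensorTensorComm_symm]
    congr 1 <;> (ext x; simp [dth, EEb, dualTensorHom_apply])
  rw [← hG c, ← hG c', sigma_indep c c']

lemma comatrixComul_eq_basis {ι : Type} [Fintype ι] (c : Module.Basis ι k M) (S : M →ₗ[k] M) :
    comatrixComul k M S = ∑ p, ∑ q, ((EEb c q p ∘ₗ S) ⊗ₜ[k] EEb c p q) := by
  have key : ∀ {ι₀ : Type} [Fintype ι₀] (c₀ : Module.Basis ι₀ k M),
      (∑ p, ∑ q, ((EEb c₀ q p ∘ₗ S) ⊗ₜ[k] EEb c₀ p q))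
        = (TensorProduct.map (LinearMap.lcomp k M S) LinearMap.id)
            (∑ p, ∑ q, EEb c₀ q p ⊗ₜ[k] EEb c₀ p q) := by
    intro ι₀ _ c₀
    rw [map_sum]
    refine Finset.sum_congr rfl fun p _ => ?_
    rw [map_sum]
    refine Finset.sum_congr rfl fun q _ => ?_
    simp only [TensorProduct.map_tmul, LinearMap.id_apply]
    congr 1
  have hb : comatrixComul k M S
      = ∑ p, ∑ q, ((EEb (Module.Free.chooseBasis k M) q p ∘ₗ S)
          ⊗ₜ[k] EEb (Module.Free.chooseBasis k M) p q) := by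
    simp only [comatrixComul, LinearMap.sum_apply, LinearMap.comp_apply]
    refine Finset.sum_congr rfl fun p _ => Finset.sum_congr rfl fun q _ => ?_
    simp only [LinearMap.llcomp_apply, smulRightL, LinearMap.coe_mk, AddHom.coe_mk,
      TensorProduct.mk_apply, LinearMap.flip_apply]
    rfl
  rw [hb, key (Module.Free.chooseBasis k M), key c, tau_indep (Module.Free.chooseBasis k M) c]

end CoendAux

variable (C : Type u) [SmallCategory C] [MonoidalCategory C] [Preadditive C]
  [CategoryTheory.Linear k C] [Abelian C]
variable (F : C ⥤ ModuleCat k) [F.Monoidal] [F.Additive] [F.Linear k]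

/-- Dinaturality of a family of maps `Hom_k(F X, F X) → U`. -/
def DinatC (U : Type w₁) [AddCommGroup U] [Module k U]
    (i : ∀ X : C, (F.obj X →ₗ[k] F.obj X) →ₗ[k] U) : Prop :=
  ∀ (X Y : C) (f : Y ⟶ X) (S : F.obj X →ₗ[k] F.obj Y),
    i X (((F.map f).hom : F.obj Y →ₗ[k] F.obj X) ∘ₗ S)
      = i Y (S ∘ₗ ((F.map f).hom : F.obj Y →ₗ[k] F.obj X))

/-- `(U, i)` is a realization of `Coend(F)`. -/
def IsCoendRealization (U : Type w₁) [AddCommGroup U] [Module k U]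
    (i : ∀ X : C, (F.obj X →ₗ[k] F.obj X) →ₗ[k] U) : Prop :=
  DinatC k C F U i ∧
  ∀ (V : Type w₂) [AddCommGroup V] [Module k V]
    (j : ∀ X : C, (F.obj X →ₗ[k] F.obj X) →ₗ[k] V), DinatC k C F V j →
    ∃! φ : U →ₗ[k] V, ∀ X : C, φ ∘ₗ i X = j X

namespace CoendAux

variable {k C F}
variable {U : Type} [AddCommGroup U] [Module k U]
  {i : ∀ X : C, (F.obj X →ₗ[k] F.obj X) →ₗ[k] U}

lemma fmap_inv_hom {X Y : C} (e : Y ≅ X) :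
    (((F.map e.inv).hom : F.obj X →ₗ[k] F.obj Y) ∘ₗ ((F.map e.hom).hom : F.obj Y →ₗ[k] F.obj X))
      = (LinearMap.id : F.obj Y →ₗ[k] F.obj Y) := by
  have h : F.map e.hom ≫ F.map e.inv = 𝟙 (F.obj Y) := by
    rw [← F.map_comp, e.hom_inv_id, F.map_id]
  exact congrArg ModuleCat.Hom.hom h

lemma fmap_hom_inv {X Y : C} (e : Y ≅ X) :
    (((F.map e.hom).hom : F.obj Y →ₗ[k] F.obj X) ∘ₗ ((F.map e.inv).hom : F.obj X →ₗ[k] F.obj Y))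
      = (LinearMap.id : F.obj X →ₗ[k] F.obj X) := by
  have h : F.map e.inv ≫ F.map e.hom = 𝟙 (F.obj X) := by
    rw [← F.map_comp, e.inv_hom_id, F.map_id]
  exact congrArg ModuleCat.Hom.hom h

/-- conjugation invariance of a dinatural family. -/
lemma dinat_conj (hd : DinatC k C F U i) {X Y : C} (e : Y ≅ X)
    (S : F.obj Y →ₗ[k] F.obj Y) :
    i X (((F.map e.hom).hom : F.obj Y →ₗ[k] F.obj X) ∘ₗ S
        ∘ₗ ((F.map e.inv).hom : F.obj X →ₗ[k] F.obj Y)) = i Y S := by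
  rw [hd X Y e.hom (S ∘ₗ ((F.map e.inv).hom : F.obj X →ₗ[k] F.obj Y))]
  congr 1
  rw [LinearMap.comp_assoc, fmap_inv_hom, LinearMap.comp_id]

lemma ext_real (hreal : IsCoendRealization.{0, 0} k C F U i)
    {V : Type} [AddCommGroup V] [Module k V]
    {φ ψ : U →ₗ[k] V} (h : ∀ X, φ ∘ₗ i X = ψ ∘ₗ i X) : φ = ψ := by
  have hd : DinatC k C F V (fun X => φ ∘ₗ i X) := by
    intro X Y f S
    simp only [LinearMap.comp_apply]
    rw [hreal.1 X Y f S]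
  obtain ⟨φ₀, -, huniq⟩ := hreal.2 V (fun X => φ ∘ₗ i X) hd
  rw [huniq φ fun X => rfl, huniq ψ fun X => (h X).symm]

lemma ext_gen (hreal : IsCoendRealization.{0, 0} k C F U i)
    {V : Type} [AddCommGroup V] [Module k V]
    {φ ψ : U →ₗ[k] V} (h : ∀ X S, φ (i X S) = ψ (i X S)) : φ = ψ :=
  ext_real hreal fun X => LinearMap.ext (h X)

lemma ext_gen2 (hreal : IsCoendRealization.{0, 0} k C F U i)
    {V : Type} [AddCommGroup V] [Module k V]
    {φ ψ : U ⊗[k] U →ₗ[k] V}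
    (h : ∀ X Y S T, φ (i X S ⊗ₜ[k] i Y T) = ψ (i X S ⊗ₜ[k] i Y T)) : φ = ψ := by
  apply TensorProduct.curry_injective
  refine ext_gen hreal fun X S => ?_
  refine ext_gen hreal fun Y T => ?_
  simpa [TensorProduct.curry_apply] using h X Y S T

lemma ext_gen3 (hreal : IsCoendRealization.{0, 0} k C F U i)
    {V : Type} [AddCommGroup V] [Module k V]
    {φ ψ : (U ⊗[k] U) ⊗[k] U →ₗ[k] V}
    (h : ∀ X Y Z S T R,
      φ ((i X S ⊗ₜ[k] i Y T) ⊗ₜ[k] i Z R) = ψ ((i X S ⊗ₜ[k] i Y T) ⊗ₜ[k] i Z R)) :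
    φ = ψ := by
  apply TensorProduct.curry_injective
  refine ext_gen2 hreal fun X Y S T => ?_
  refine ext_gen hreal fun Z R => ?_
  simpa [TensorProduct.curry_apply] using h X Y Z S T R

def μL (X Y : C) : (F.obj X ⊗[k] F.obj Y) →ₗ[k] F.obj (X ⊗ Y) := (μ F X Y).hom

def δL (X Y : C) : F.obj (X ⊗ Y) →ₗ[k] (F.obj X ⊗[k] F.obj Y) := (δ F X Y).hom

lemma μδL (X Y : C) : μL (F := F) X Y ∘ₗ δL (F := F) X Y = LinearMap.id :=
  congrArg ModuleCat.Hom.hom (Functor.Monoidal.δ_μ (F := F) X Y)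

lemma δμL (X Y : C) : δL (F := F) X Y ∘ₗ μL (F := F) X Y = LinearMap.id :=
  congrArg ModuleCat.Hom.hom (Functor.Monoidal.μ_δ (F := F) X Y)

/-- the equivalence `F X ⊗ F Y ≃ F (X ⊗ Y)` given by `μ`. -/
def μEquiv (X Y : C) : (F.obj X ⊗[k] F.obj Y) ≃ₗ[k] F.obj (X ⊗ Y) :=
  LinearEquiv.ofLinear (μL (F := F) X Y) (δL (F := F) X Y) (μδL X Y) (δμL X Y)

/-- transported product basis on `F (X ⊗ Y)`. -/
def prodBasis {ι ι' : Type} {X Y : C} (bX : Module.Basis ι k (F.obj X)) (bY : Module.Basis ι' k (F.obj Y)) :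
    Module.Basis (ι × ι') k (F.obj (X ⊗ Y)) :=
  (bX.tensorProduct bY).map (μEquiv X Y)

lemma comp_cancel_μ {X Y : C} {V : Type} [AddCommGroup V] [Module k V]
    {f g : F.obj (X ⊗ Y) →ₗ[k] V}
    (h : f ∘ₗ μL (F := F) X Y = g ∘ₗ μL (F := F) X Y) : f = g := by
  have := congrArg (fun t => t ∘ₗ δL (F := F) X Y) h
  simpa only [LinearMap.comp_assoc, μδL, LinearMap.comp_id] using this

lemma EEb_prodBasis {ι ι' : Type} {X Y : C}
    (bX : Module.Basis ι k (F.obj X)) (bY : Module.Basis ι' k (F.obj Y)) (a c : ι) (b d : ι') :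
    EEb (prodBasis bX bY) (a, b) (c, d)
      = μL (F := F) X Y ∘ₗ TensorProduct.map (EEb bX a c) (EEb bY b d) ∘ₗ δL (F := F) X Y := by
  apply comp_cancel_μ
  apply TensorProduct.ext'
  intro x y
  have hμ : ∀ t : F.obj X ⊗[k] F.obj Y, μL (F := F) X Y t = μEquiv (F := F) X Y t := fun t => rfl
  have hδμ : δL (F := F) X Y (μL (F := F) X Y (x ⊗ₜ[k] y)) = x ⊗ₜ[k] y := by
    have := congrFun (congrArg DFunLike.coe (δμL (F := F) X Y)) (x ⊗ₜ[k] y)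
    simpa using this
  simp only [LinearMap.comp_apply, hδμ, EEb_apply, TensorProduct.map_tmul]
  -- LHS: EEb (prodBasis bX bY) (a,b) (c,d) (μ (x ⊗ y))
  rw [show (prodBasis bX bY).repr (μL (F := F) X Y (x ⊗ₜ[k] y))
      = (bX.tensorProduct bY).repr (x ⊗ₜ[k] y) from ?_]
  · rw [Module.Basis.tensorProduct_repr_tmul_apply]
    rw [show (prodBasis bX bY) (a, b) = μL (F := F) X Y (bX a ⊗ₜ[k] bY b) from ?_]
    · simp only [TensorProduct.smul_tmul', TensorProduct.tmul_smul, map_smul, smul_smul]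
      rw [← TensorProduct.smul_tmul', map_smul, smul_eq_mul, mul_comm]
    · rw [prodBasis, Module.Basis.map_apply, Module.Basis.tensorProduct_apply]
      exact (hμ _).symm
  · rw [prodBasis, Module.Basis.map_repr]
    simp only [LinearEquiv.trans_apply]
    rw [hμ, LinearEquiv.symm_apply_apply]

lemma assoc_natL {A B C' A' B' C'' : Type}
    [AddCommGroup A] [Module k A] [AddCommGroup B] [Module k B]
    [AddCommGroup C'] [Module k C'] [AddCommGroup A'] [Module k A']
    [AddCommGroup B'] [Module k B'] [AddCommGroup C''] [Module k C'']
    (f : A →ₗ[k] A') (g : B →ₗ[k] B') (h : C' →ₗ[k] C'') :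
    (TensorProduct.assoc k A' B' C'').toLinearMap ∘ₗ
        TensorProduct.map (TensorProduct.map f g) h
      = TensorProduct.map f (TensorProduct.map g h) ∘ₗ
          (TensorProduct.assoc k A B C').toLinearMap := by
  apply TensorProduct.ext_threefold
  intro x y z
  simp

lemma map_triple {A₁ A₂ A₃ A₄ B₁ B₂ : Type}
    [AddCommGroup A₁] [Module k A₁] [AddCommGroup A₂] [Module k A₂]
    [AddCommGroup A₃] [Module k A₃] [AddCommGroup A₄] [Module k A₄]
    [AddCommGroup B₁] [Module k B₁] [AddCommGroup B₂] [Module k B₂]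
    (f : A₃ →ₗ[k] A₄) (g : A₂ →ₗ[k] A₃) (h : A₁ →ₗ[k] A₂) (r : B₁ →ₗ[k] B₂) :
    TensorProduct.map (f ∘ₗ g ∘ₗ h) r
      = TensorProduct.map f LinearMap.id ∘ₗ TensorProduct.map g r ∘ₗ
          TensorProduct.map h LinearMap.id := by
  apply TensorProduct.ext'; intro x y; simp

lemma map_triple' {A₁ A₂ A₃ A₄ B₁ B₂ : Type}
    [AddCommGroup A₁] [Module k A₁] [AddCommGroup A₂] [Module k A₂]
    [AddCommGroup A₃] [Module k A₃] [AddCommGroup A₄] [Module k A₄]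
    [AddCommGroup B₁] [Module k B₁] [AddCommGroup B₂] [Module k B₂]
    (f : A₃ →ₗ[k] A₄) (g : A₂ →ₗ[k] A₃) (h : A₁ →ₗ[k] A₂) (r : B₁ →ₗ[k] B₂) :
    TensorProduct.map r (f ∘ₗ g ∘ₗ h)
      = TensorProduct.map LinearMap.id f ∘ₗ TensorProduct.map r g ∘ₗ
          TensorProduct.map LinearMap.id h := by
  apply TensorProduct.ext'; intro x y; simp

/-- conjugation of endomorphisms, as a linear map. -/
def conjL {A B : Type} [AddCommGroup A] [Module k A] [AddCommGroup B] [Module k B]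
    (f : A →ₗ[k] B) (g : B →ₗ[k] A) : (A →ₗ[k] A) →ₗ[k] (B →ₗ[k] B) where
  toFun P := f ∘ₗ P ∘ₗ g
  map_add' P Q := by ext x; simp
  map_smul' c P := by ext x; simp

/-- the bilinear map `(S, T) ↦ μ ∘ (S ⊗ T) ∘ δ`. -/
def sandwichL (X Y : C) :
    (F.obj X →ₗ[k] F.obj X) →ₗ[k] (F.obj Y →ₗ[k] F.obj Y) →ₗ[k]
      (F.obj (X ⊗ Y) →ₗ[k] F.obj (X ⊗ Y)) :=
  (TensorProduct.mapBilinear (RingHom.id k) (F.obj X) (F.obj Y) (F.obj X) (F.obj Y)).compr₂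
    (conjL (μL (F := F) X Y) (δL (F := F) X Y))

lemma sandwichL_apply (X Y : C) (S : F.obj X →ₗ[k] F.obj X) (T : F.obj Y →ₗ[k] F.obj Y) :
    sandwichL X Y S T
      = μL (F := F) X Y ∘ₗ TensorProduct.map S T ∘ₗ δL (F := F) X Y := rfl

lemma sandwichL_comp (X Y : C) (A S : F.obj X →ₗ[k] F.obj X)
    (B T : F.obj Y →ₗ[k] F.obj Y) :
    sandwichL X Y A B ∘ₗ sandwichL X Y S T = sandwichL (F := F) X Y (A ∘ₗ S) (B ∘ₗ T) := by
  have hpt : ∀ t : F.obj X ⊗[k] F.obj Y, δL (F := F) X Y (μL (F := F) X Y t) = t :=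
    fun t => LinearMap.congr_fun (δμL (F := F) X Y) t
  apply comp_cancel_μ
  apply TensorProduct.ext'
  intro x y
  simp [sandwichL_apply, LinearMap.comp_apply, hpt, TensorProduct.map_tmul]

variable {U : Type} [AddCommGroup U] [Module k U]
  {i : ∀ X : C, (F.obj X →ₗ[k] F.obj X) →ₗ[k] U}

/-- dinaturality of the family `T ↦ i (X ⊗ Y) (μ (S ⊗ T) δ)` in `Y`. -/
lemma dinat_right (hd : DinatC k C F U i) (X : C) (S : F.obj X →ₗ[k] F.obj X)
    (Y₁ Y₂ : C) (f : Y₂ ⟶ Y₁) (T : F.obj Y₁ →ₗ[k] F.obj Y₂) :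
    i (X ⊗ Y₁) (sandwichL X Y₁ S (((F.map f).hom : F.obj Y₂ →ₗ[k] F.obj Y₁) ∘ₗ T))
      = i (X ⊗ Y₂) (sandwichL X Y₂ S (T ∘ₗ ((F.map f).hom : F.obj Y₂ →ₗ[k] F.obj Y₁))) := by
  have hμ : μL (F := F) X Y₁ ∘ₗ
        TensorProduct.map LinearMap.id ((F.map f).hom : F.obj Y₂ →ₗ[k] F.obj Y₁)
      = ((F.map (X ◁ f)).hom : F.obj (X ⊗ Y₂) →ₗ[k] F.obj (X ⊗ Y₁)) ∘ₗ μL (F := F) X Y₂ :=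
    congrArg ModuleCat.Hom.hom (Functor.LaxMonoidal.μ_natural_right F X f)
  have hδ : TensorProduct.map LinearMap.id ((F.map f).hom : F.obj Y₂ →ₗ[k] F.obj Y₁) ∘ₗ
        δL (F := F) X Y₂
      = δL (F := F) X Y₁ ∘ₗ ((F.map (X ◁ f)).hom : F.obj (X ⊗ Y₂) →ₗ[k] F.obj (X ⊗ Y₁)) :=
    congrArg ModuleCat.Hom.hom (Functor.OplaxMonoidal.δ_natural_right F X f)
  set P : F.obj (X ⊗ Y₁) →ₗ[k] F.obj (X ⊗ Y₂) :=
    μL (F := F) X Y₂ ∘ₗ TensorProduct.map S T ∘ₗ δL (F := F) X Y₁ with hP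
  have e1 : sandwichL X Y₁ S (((F.map f).hom : F.obj Y₂ →ₗ[k] F.obj Y₁) ∘ₗ T)
      = ((F.map (X ◁ f)).hom : F.obj (X ⊗ Y₂) →ₗ[k] F.obj (X ⊗ Y₁)) ∘ₗ P := by
    rw [sandwichL_apply, hP]
    apply LinearMap.ext; intro w
    have hsplit : TensorProduct.map S (((F.map f).hom : F.obj Y₂ →ₗ[k] F.obj Y₁) ∘ₗ T)
        = (TensorProduct.map LinearMap.id ((F.map f).hom : F.obj Y₂ →ₗ[k] F.obj Y₁)) ∘ₗ
            TensorProduct.map S T := by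
      rw [← TensorProduct.map_comp, LinearMap.id_comp]
    simp only [LinearMap.comp_apply, hsplit]
    exact LinearMap.congr_fun hμ _
  have e2 : sandwichL X Y₂ S (T ∘ₗ ((F.map f).hom : F.obj Y₂ →ₗ[k] F.obj Y₁))
      = P ∘ₗ ((F.map (X ◁ f)).hom : F.obj (X ⊗ Y₂) →ₗ[k] F.obj (X ⊗ Y₁)) := by
    rw [sandwichL_apply, hP]
    apply LinearMap.ext; intro w
    have hsplit : TensorProduct.map S
          (T ∘ₗ ((F.map f).hom : F.obj Y₂ →ₗ[k] F.obj Y₁))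
        = TensorProduct.map S T ∘ₗ
            TensorProduct.map LinearMap.id ((F.map f).hom : F.obj Y₂ →ₗ[k] F.obj Y₁) := by
      rw [← TensorProduct.map_comp, LinearMap.comp_id]
    simp only [LinearMap.comp_apply, hsplit]
    congr 1
    exact (LinearMap.congr_fun hδ w).symm ▸ rfl
  rw [e1, e2]
  exact hd (X ⊗ Y₁) (X ⊗ Y₂) (X ◁ f) P

/-- dinaturality of the family `S ↦ i (X ⊗ Y) (μ (S ⊗ T) δ)` in `X`. -/
lemma dinat_left (hd : DinatC k C F U i) (Z : C) (T : F.obj Z →ₗ[k] F.obj Z)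
    (X Y : C) (f : Y ⟶ X) (S : F.obj X →ₗ[k] F.obj Y) :
    i (X ⊗ Z) (sandwichL X Z (((F.map f).hom : F.obj Y →ₗ[k] F.obj X) ∘ₗ S) T)
      = i (Y ⊗ Z) (sandwichL Y Z (S ∘ₗ ((F.map f).hom : F.obj Y →ₗ[k] F.obj X)) T) := by
  have hμ : μL (F := F) X Z ∘ₗ
        TensorProduct.map ((F.map f).hom : F.obj Y →ₗ[k] F.obj X) LinearMap.id
      = ((F.map (f ▷ Z)).hom : F.obj (Y ⊗ Z) →ₗ[k] F.obj (X ⊗ Z)) ∘ₗ μL (F := F) Y Z :=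
    congrArg ModuleCat.Hom.hom (Functor.LaxMonoidal.μ_natural_left F f Z)
  have hδ : TensorProduct.map ((F.map f).hom : F.obj Y →ₗ[k] F.obj X) LinearMap.id ∘ₗ
        δL (F := F) Y Z
      = δL (F := F) X Z ∘ₗ ((F.map (f ▷ Z)).hom : F.obj (Y ⊗ Z) →ₗ[k] F.obj (X ⊗ Z)) :=
    congrArg ModuleCat.Hom.hom (Functor.OplaxMonoidal.δ_natural_left F f Z)
  set P : F.obj (X ⊗ Z) →ₗ[k] F.obj (Y ⊗ Z) :=
    μL (F := F) Y Z ∘ₗ TensorProduct.map S T ∘ₗ δL (F := F) X Z with hP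
  have e1 : sandwichL X Z (((F.map f).hom : F.obj Y →ₗ[k] F.obj X) ∘ₗ S) T
      = ((F.map (f ▷ Z)).hom : F.obj (Y ⊗ Z) →ₗ[k] F.obj (X ⊗ Z)) ∘ₗ P := by
    rw [sandwichL_apply, hP]
    apply LinearMap.ext; intro w
    have hsplit : TensorProduct.map (((F.map f).hom : F.obj Y →ₗ[k] F.obj X) ∘ₗ S) T
        = (TensorProduct.map ((F.map f).hom : F.obj Y →ₗ[k] F.obj X) LinearMap.id) ∘ₗ
            TensorProduct.map S T := by
      rw [← TensorProduct.map_comp, LinearMap.id_comp]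
    simp only [LinearMap.comp_apply, hsplit]
    exact LinearMap.congr_fun hμ _
  have e2 : sandwichL Y Z (S ∘ₗ ((F.map f).hom : F.obj Y →ₗ[k] F.obj X)) T
      = P ∘ₗ ((F.map (f ▷ Z)).hom : F.obj (Y ⊗ Z) →ₗ[k] F.obj (X ⊗ Z)) := by
    rw [sandwichL_apply, hP]
    apply LinearMap.ext; intro w
    have hsplit : TensorProduct.map (S ∘ₗ ((F.map f).hom : F.obj Y →ₗ[k] F.obj X)) T
        = TensorProduct.map S T ∘ₗ
            TensorProduct.map ((F.map f).hom : F.obj Y →ₗ[k] F.obj X) LinearMap.id := by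
      rw [← TensorProduct.map_comp, LinearMap.comp_id]
    simp only [LinearMap.comp_apply, hsplit]
    congr 1
    exact (LinearMap.congr_fun hδ w).symm ▸ rfl
  rw [e1, e2]
  exact hd (X ⊗ Z) (Y ⊗ Z) (f ▷ Z) P

/-- the key monoidal computation for associativity. -/
lemma assoc_key (hd : DinatC k C F U i) (X Y Z : C)
    (S : F.obj X →ₗ[k] F.obj X) (T : F.obj Y →ₗ[k] F.obj Y) (R : F.obj Z →ₗ[k] F.obj Z) :
    i (X ⊗ (Y ⊗ Z)) (sandwichL X (Y ⊗ Z) S (sandwichL Y Z T R))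
      = i ((X ⊗ Y) ⊗ Z) (sandwichL (X ⊗ Y) Z (sandwichL X Y S T) R) := by
  set Fα : F.obj ((X ⊗ Y) ⊗ Z) →ₗ[k] F.obj (X ⊗ (Y ⊗ Z)) := (F.map (α_ X Y Z).hom).hom with hFα
  set Fαi : F.obj (X ⊗ (Y ⊗ Z)) →ₗ[k] F.obj ((X ⊗ Y) ⊗ Z) := (F.map (α_ X Y Z).inv).hom with hFαi
  set A := sandwichL (F := F) (X ⊗ Y) Z (sandwichL X Y S T) R with hA
  set B := sandwichL (F := F) X (Y ⊗ Z) S (sandwichL Y Z T R) with hB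
  have hBA : ∀ w, B (Fα w) = Fα (A w) := by
    intro w
    have phassoc : ∀ t : (F.obj X ⊗[k] F.obj Y) ⊗[k] F.obj Z,
        Fα (μL (F := F) (X ⊗ Y) Z (TensorProduct.map (μL (F := F) X Y) LinearMap.id t))
          = μL (F := F) X (Y ⊗ Z) (TensorProduct.map LinearMap.id (μL (F := F) Y Z)
              ((TensorProduct.assoc k (F.obj X) (F.obj Y) (F.obj Z)).toLinearMap t)) := by
      intro t
      have h : Fα ∘ₗ μL (F := F) (X ⊗ Y) Z ∘ₗ
            TensorProduct.map (μL (F := F) X Y) LinearMap.id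
          = μL (F := F) X (Y ⊗ Z) ∘ₗ TensorProduct.map LinearMap.id (μL (F := F) Y Z) ∘ₗ
              (TensorProduct.assoc k (F.obj X) (F.obj Y) (F.obj Z)).toLinearMap :=
        congrArg ModuleCat.Hom.hom (Functor.LaxMonoidal.associativity F X Y Z)
      exact LinearMap.congr_fun h t
    have phoplax : ∀ w₀ : F.obj ((X ⊗ Y) ⊗ Z),
        (TensorProduct.assoc k (F.obj X) (F.obj Y) (F.obj Z)).toLinearMap
            (TensorProduct.map (δL (F := F) X Y) LinearMap.id (δL (F := F) (X ⊗ Y) Z w₀))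
          = TensorProduct.map LinearMap.id (δL (F := F) Y Z)
              (δL (F := F) X (Y ⊗ Z) (Fα w₀)) := by
      intro w₀
      have h : (TensorProduct.assoc k (F.obj X) (F.obj Y) (F.obj Z)).toLinearMap ∘ₗ
            TensorProduct.map (δL (F := F) X Y) LinearMap.id ∘ₗ δL (F := F) (X ⊗ Y) Z
          = TensorProduct.map LinearMap.id (δL (F := F) Y Z) ∘ₗ
              δL (F := F) X (Y ⊗ Z) ∘ₗ Fα :=
        congrArg ModuleCat.Hom.hom (Functor.OplaxMonoidal.associativity F X Y Z)
      exact LinearMap.congr_fun h w₀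
    have pA : ∀ w₀, A w₀
        = μL (F := F) (X ⊗ Y) Z ((TensorProduct.map (μL (F := F) X Y) LinearMap.id)
            ((TensorProduct.map (TensorProduct.map S T) R)
              ((TensorProduct.map (δL (F := F) X Y) LinearMap.id)
                (δL (F := F) (X ⊗ Y) Z w₀)))) := by
      intro w₀
      rw [hA, sandwichL_apply, sandwichL_apply]
      simp only [LinearMap.comp_apply]
      rw [map_triple]
      simp only [LinearMap.comp_apply]
    have pB : ∀ v : F.obj (X ⊗ (Y ⊗ Z)), B v
        = μL (F := F) X (Y ⊗ Z) ((TensorProduct.map LinearMap.id (μL (F := F) Y Z))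
            ((TensorProduct.map S (TensorProduct.map T R))
              ((TensorProduct.map LinearMap.id (δL (F := F) Y Z))
                (δL (F := F) X (Y ⊗ Z) v)))) := by
      intro v
      rw [hB, sandwichL_apply, sandwichL_apply]
      simp only [LinearMap.comp_apply]
      rw [map_triple']
      simp only [LinearMap.comp_apply]
    have pnat : ∀ t : (F.obj X ⊗[k] F.obj Y) ⊗[k] F.obj Z,
        (TensorProduct.assoc k (F.obj X) (F.obj Y) (F.obj Z)).toLinearMap
            (TensorProduct.map (TensorProduct.map S T) R t)
          = TensorProduct.map S (TensorProduct.map T R)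
              ((TensorProduct.assoc k (F.obj X) (F.obj Y) (F.obj Z)).toLinearMap t) :=
      fun t => LinearMap.congr_fun (assoc_natL S T R) t
    rw [pA, pB, phassoc, pnat, phoplax]
  have hcomp : B ∘ₗ Fα = Fα ∘ₗ A := LinearMap.ext hBA
  rw [← dinat_conj hd (α_ X Y Z) A]
  congr 1
  -- B = Fα ∘ₗ A ∘ₗ Fαi
  apply LinearMap.ext; intro v
  have hv : Fα (Fαi v) = v := LinearMap.congr_fun (fmap_hom_inv (F := F) (α_ X Y Z)) v
  calc B v = B (Fα (Fαi v)) := by rw [hv]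
    _ = Fα (A (Fαi v)) := hBA _
    _ = (Fα ∘ₗ A ∘ₗ Fαi) v := rfl

/-- the key monoidal computation for the left unit law. -/
lemma unit_left (hd : DinatC k C F U i) (X : C) (S : F.obj X →ₗ[k] F.obj X) :
    i (𝟙_ C ⊗ X) (sandwichL (𝟙_ C) X LinearMap.id S) = i X S := by
  set εF : k →ₗ[k] F.obj (𝟙_ C) := (ε F).hom with hεF
  set ηF : F.obj (𝟙_ C) →ₗ[k] k := (η F).hom with hηF
  set Flam : F.obj (𝟙_ C ⊗ X) →ₗ[k] F.obj X := (F.map (λ_ X).hom).hom with hFlam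
  set Flami : F.obj X →ₗ[k] F.obj (𝟙_ C ⊗ X) := (F.map (λ_ X).inv).hom with hFlami
  have hlu : (TensorProduct.lid k (F.obj X)).toLinearMap
      = Flam ∘ₗ μL (F := F) (𝟙_ C) X ∘ₗ TensorProduct.map εF LinearMap.id :=
    congrArg ModuleCat.Hom.hom (Functor.LaxMonoidal.left_unitality F X)
  have hεη : εF ∘ₗ ηF = LinearMap.id := congrArg ModuleCat.Hom.hom (Functor.Monoidal.η_ε (F := F))
  have key1 : Flam ∘ₗ μL (F := F) (𝟙_ C) X
      = (TensorProduct.lid k (F.obj X)).toLinearMap ∘ₗ TensorProduct.map ηF LinearMap.id := by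
    rw [hlu]
    apply TensorProduct.ext'
    intro c x
    simp only [LinearMap.comp_apply, TensorProduct.map_tmul, LinearMap.id_apply]
    rw [show εF (ηF c) = c from LinearMap.congr_fun hεη c]
  have key2 : Flam ∘ₗ sandwichL (𝟙_ C) X LinearMap.id S ∘ₗ Flami = S := by
    have hswap : Flam ∘ₗ μL (F := F) (𝟙_ C) X ∘ₗ TensorProduct.map LinearMap.id S
        = S ∘ₗ Flam ∘ₗ μL (F := F) (𝟙_ C) X := by
      apply TensorProduct.ext'
      intro c x
      have k1 : ∀ t, Flam (μL (F := F) (𝟙_ C) X t)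
          = (TensorProduct.lid k (F.obj X)) (TensorProduct.map ηF LinearMap.id t) :=
        fun t => LinearMap.congr_fun key1 t
      simp only [LinearMap.comp_apply, TensorProduct.map_tmul, LinearMap.id_apply, k1]
      simp [TensorProduct.lid_tmul]
    apply LinearMap.ext; intro x
    have h1 : sandwichL (F := F) (𝟙_ C) X LinearMap.id S (Flami x)
        = μL (F := F) (𝟙_ C) X (TensorProduct.map LinearMap.id S
            (δL (F := F) (𝟙_ C) X (Flami x))) := by rw [sandwichL_apply]; rfl
    simp only [LinearMap.comp_apply, h1]
    have h2 := LinearMap.congr_fun hswap (δL (F := F) (𝟙_ C) X (Flami x))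
    simp only [LinearMap.comp_apply] at h2
    rw [h2]
    have h3 : μL (F := F) (𝟙_ C) X (δL (F := F) (𝟙_ C) X (Flami x)) = Flami x :=
      LinearMap.congr_fun (μδL (F := F) (𝟙_ C) X) (Flami x)
    rw [h3]
    congr 1
    exact LinearMap.congr_fun (fmap_hom_inv (F := F) (λ_ X)) x
  rw [← dinat_conj hd (λ_ X) (sandwichL (𝟙_ C) X LinearMap.id S)]
  exact congrArg (i X) key2

/-- the key monoidal computation for the right unit law. -/
lemma unit_right (hd : DinatC k C F U i) (X : C) (S : F.obj X →ₗ[k] F.obj X) :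
    i (X ⊗ 𝟙_ C) (sandwichL X (𝟙_ C) S LinearMap.id) = i X S := by
  set εF : k →ₗ[k] F.obj (𝟙_ C) := (ε F).hom with hεF
  set ηF : F.obj (𝟙_ C) →ₗ[k] k := (η F).hom with hηF
  set Fρ : F.obj (X ⊗ 𝟙_ C) →ₗ[k] F.obj X := (F.map (ρ_ X).hom).hom with hFρ
  set Fρi : F.obj X →ₗ[k] F.obj (X ⊗ 𝟙_ C) := (F.map (ρ_ X).inv).hom with hFρi
  have hru : (TensorProduct.rid k (F.obj X)).toLinearMap
      = Fρ ∘ₗ μL (F := F) X (𝟙_ C) ∘ₗ TensorProduct.map LinearMap.id εF :=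
    congrArg ModuleCat.Hom.hom (Functor.LaxMonoidal.right_unitality F X)
  have hεη : εF ∘ₗ ηF = LinearMap.id := congrArg ModuleCat.Hom.hom (Functor.Monoidal.η_ε (F := F))
  have key1 : Fρ ∘ₗ μL (F := F) X (𝟙_ C)
      = (TensorProduct.rid k (F.obj X)).toLinearMap ∘ₗ TensorProduct.map LinearMap.id ηF := by
    rw [hru]
    apply TensorProduct.ext'
    intro x c
    simp only [LinearMap.comp_apply, TensorProduct.map_tmul, LinearMap.id_apply]
    rw [show εF (ηF c) = c from LinearMap.congr_fun hεη c]
  have key2 : Fρ ∘ₗ sandwichL X (𝟙_ C) S LinearMap.id ∘ₗ Fρi = S := by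
    have hswap : Fρ ∘ₗ μL (F := F) X (𝟙_ C) ∘ₗ TensorProduct.map S LinearMap.id
        = S ∘ₗ Fρ ∘ₗ μL (F := F) X (𝟙_ C) := by
      apply TensorProduct.ext'
      intro x c
      have k1 : ∀ t, Fρ (μL (F := F) X (𝟙_ C) t)
          = (TensorProduct.rid k (F.obj X)) (TensorProduct.map LinearMap.id ηF t) :=
        fun t => LinearMap.congr_fun key1 t
      simp only [LinearMap.comp_apply, TensorProduct.map_tmul, LinearMap.id_apply, k1]
      simp [TensorProduct.rid_tmul]
    apply LinearMap.ext; intro x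
    have h1 : sandwichL (F := F) X (𝟙_ C) S LinearMap.id (Fρi x)
        = μL (F := F) X (𝟙_ C) (TensorProduct.map S LinearMap.id
            (δL (F := F) X (𝟙_ C) (Fρi x))) := by rw [sandwichL_apply]; rfl
    simp only [LinearMap.comp_apply, h1]
    have h2 := LinearMap.congr_fun hswap (δL (F := F) X (𝟙_ C) (Fρi x))
    simp only [LinearMap.comp_apply] at h2
    rw [h2]
    have h3 : μL (F := F) X (𝟙_ C) (δL (F := F) X (𝟙_ C) (Fρi x)) = Fρi x :=
      LinearMap.congr_fun (μδL (F := F) X (𝟙_ C)) (Fρi x)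
    rw [h3]
    congr 1
    exact LinearMap.congr_fun (fmap_hom_inv (F := F) (ρ_ X)) x
  rw [← dinat_conj hd (ρ_ X) (sandwichL X (𝟙_ C) S LinearMap.id)]
  exact congrArg (i X) key2

end CoendAux

set_option maxHeartbeats 2000000 in
open CoendAux in
theorem coend_bialgebra
    -- strictness of the tensor category C:
    (hobj : ∀ X Y Z : C, (X ⊗ Y) ⊗ Z = X ⊗ (Y ⊗ Z))
    (hassoc : ∀ X Y Z : C, (α_ X Y Z).hom = eqToHom (hobj X Y Z))
    (hul : ∀ X : C, 𝟙_ C ⊗ X = X) (hlam : ∀ X : C, (λ_ X).hom = eqToHom (hul X))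
    (hur : ∀ X : C, X ⊗ 𝟙_ C = X) (hrho : ∀ X : C, (ρ_ X).hom = eqToHom (hur X))
    (hfd : ∀ X : C, FiniteDimensional k (F.obj X))
    -- a realization of Coend(F) with its induced coalgebra structure:
    (U : Type) [AddCommGroup U] [Module k U]
    (i : ∀ X : C, (F.obj X →ₗ[k] F.obj X) →ₗ[k] U)
    (hreal : IsCoendRealization.{0, 0} k C F U i)
    (Δ : U →ₗ[k] U ⊗[k] U) (ε : U →ₗ[k] k)
    (hΔ : ∀ X : C, haveI := hfd X;
      Δ ∘ₗ i X = (TensorProduct.map (i X) (i X)) ∘ₗ comatrixComul k (F.obj X))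
    (hε : ∀ X : C, ε ∘ₗ i X = LinearMap.trace k (F.obj X)) :
    ∃ m : U ⊗[k] U →ₗ[k] U,
      -- m is well defined by the formula m(i_X S ⊗ i_Y T) = i_{X⊗Y}(F₂ (S⊗T) F₂⁻¹):
      (∀ (X Y : C) (S : F.obj X →ₗ[k] F.obj X) (T : F.obj Y →ₗ[k] F.obj Y),
        m (i X S ⊗ₜ[k] i Y T)
          = i (X ⊗ Y) (((μ F X Y).hom : (F.obj X ⊗[k] F.obj Y) →ₗ[k] F.obj (X ⊗ Y)) ∘ₗ
              (TensorProduct.map S T) ∘ₗ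
              ((δ F X Y).hom : F.obj (X ⊗ Y) →ₗ[k] (F.obj X ⊗[k] F.obj Y)))) ∧
      -- associativity:
      (m ∘ₗ TensorProduct.map m LinearMap.id
        = (m ∘ₗ TensorProduct.map LinearMap.id m) ∘ₗ
            (TensorProduct.assoc k U U U).toLinearMap) ∧
      -- η = i_I(id) is a unit for m:
      (∀ u : U, m (i (𝟙_ C) LinearMap.id ⊗ₜ[k] u) = u) ∧
      (∀ u : U, m (u ⊗ₜ[k] i (𝟙_ C) LinearMap.id) = u) ∧
      -- m and η are coalgebra maps, i.e. (U, Δ, ε, m, η) is a bialgebra: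
      (Δ ∘ₗ m = (TensorProduct.map m m) ∘ₗ
          (tensorTensorTensorComm k U U U U).toLinearMap ∘ₗ (TensorProduct.map Δ Δ)) ∧
      (ε ∘ₗ m = (TensorProduct.lid k k).toLinearMap ∘ₗ TensorProduct.map ε ε) ∧
      (Δ (i (𝟙_ C) LinearMap.id)
        = i (𝟙_ C) LinearMap.id ⊗ₜ[k] i (𝟙_ C) LinearMap.id) ∧
      (ε (i (𝟙_ C) LinearMap.id) = 1) := by
  classical
  have hdin := hreal.1
  have hup := hreal.2
  -- construction of the multiplication
  have hex : ∀ (X : C) (S : F.obj X →ₗ[k] F.obj X),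
      ∃ φ : U →ₗ[k] U, (∀ Y : C, φ ∘ₗ i Y = i (X ⊗ Y) ∘ₗ sandwichL X Y S)
        ∧ ∀ ψ : U →ₗ[k] U, (∀ Y : C, ψ ∘ₗ i Y = i (X ⊗ Y) ∘ₗ sandwichL X Y S) → ψ = φ := by
    intro X S
    have hd : DinatC k C F U (fun Y => i (X ⊗ Y) ∘ₗ sandwichL X Y S) := by
      intro Y₁ Y₂ f T
      simp only [LinearMap.comp_apply]
      exact dinat_right hdin X S Y₁ Y₂ f T
    obtain ⟨φ, h1, h2⟩ := hup U (fun Y => i (X ⊗ Y) ∘ₗ sandwichL X Y S) hd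
    exact ⟨φ, h1, h2⟩
  choose φf hφ huni using hex
  have hφ' : ∀ (X : C) S (Y : C) T, φf X S (i Y T) = i (X ⊗ Y) (sandwichL X Y S T) :=
    fun X S Y T => LinearMap.congr_fun (hφ X S Y) T
  have hadd : ∀ (X : C) S S', φf X (S + S') = φf X S + φf X S' := by
    intro X S S'
    refine (huni X (S + S') (φf X S + φf X S') fun Y => ?_).symm
    ext T
    simp only [LinearMap.add_apply, LinearMap.comp_apply, hφ' X S Y T, hφ' X S' Y T,
      map_add, LinearMap.add_apply]
  have hsmul : ∀ (X : C) (c : k) S, φf X (c • S) = c • φf X S := by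
    intro X c S
    refine (huni X (c • S) (c • φf X S) fun Y => ?_).symm
    ext T
    simp only [LinearMap.smul_apply, LinearMap.comp_apply, hφ' X S Y T,
      map_smul, LinearMap.smul_apply]
  set J : ∀ X : C, (F.obj X →ₗ[k] F.obj X) →ₗ[k] (U →ₗ[k] U) :=
    fun X => ⟨⟨φf X, hadd X⟩, fun c S => hsmul X c S⟩ with hJ
  have hJd : DinatC k C F (U →ₗ[k] U) J := by
    intro X Y f S
    show φf X (((F.map f).hom : F.obj Y →ₗ[k] F.obj X) ∘ₗ S)
      = φf Y (S ∘ₗ ((F.map f).hom : F.obj Y →ₗ[k] F.obj X))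
    refine (huni X (((F.map f).hom : F.obj Y →ₗ[k] F.obj X) ∘ₗ S)
      (φf Y (S ∘ₗ ((F.map f).hom : F.obj Y →ₗ[k] F.obj X))) fun Z => ?_).symm
    ext T
    simp only [LinearMap.comp_apply, hφ' Y _ Z T]
    exact (dinat_left hdin Z T X Y f S).symm
  obtain ⟨Φ, hΦ, -⟩ := hup (U →ₗ[k] U) J hJd
  set m : U ⊗[k] U →ₗ[k] U := TensorProduct.lift Φ with hmdef
  have hm : ∀ (X Y : C) S T, m (i X S ⊗ₜ[k] i Y T) = i (X ⊗ Y) (sandwichL X Y S T) := by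
    intro X Y S T
    have h1 : Φ (i X S) = J X S := LinearMap.congr_fun (hΦ X) S
    rw [hmdef, TensorProduct.lift.tmul, h1]
    exact hφ' X S Y T
  refine ⟨m, fun X Y S T => hm X Y S T, ?_, ?_, ?_, ?_, ?_, ?_, ?_⟩
  · -- associativity
    refine ext_gen3 hreal fun X Y Z S T R => ?_
    simp only [LinearMap.comp_apply, TensorProduct.map_tmul, LinearMap.id_coe, id_eq,
      LinearEquiv.coe_coe, TensorProduct.assoc_tmul]
    rw [hm X Y S T, hm Y Z T R, hm (X ⊗ Y) Z _ R, hm X (Y ⊗ Z) S _]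
    exact (assoc_key hdin X Y Z S T R).symm
  · -- left unit
    have h : m ∘ₗ TensorProduct.mk k U U (i (𝟙_ C) LinearMap.id) = LinearMap.id := by
      refine ext_gen hreal fun X S => ?_
      simp only [LinearMap.comp_apply, TensorProduct.mk_apply, LinearMap.id_coe, id_eq]
      rw [hm (𝟙_ C) X LinearMap.id S]
      exact unit_left hdin X S
    exact fun u => LinearMap.congr_fun h u
  · -- right unit
    have h : m ∘ₗ (TensorProduct.mk k U U).flip (i (𝟙_ C) LinearMap.id) = LinearMap.id := by
      refine ext_gen hreal fun X S => ?_
      simp only [LinearMap.comp_apply, LinearMap.flip_apply, TensorProduct.mk_apply,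
        LinearMap.id_coe, id_eq]
      rw [hm X (𝟙_ C) S LinearMap.id]
      exact unit_right hdin X S
    exact fun u => LinearMap.congr_fun h u
  · -- Δ is multiplicative
    refine ext_gen2 hreal fun X Y S T => ?_
    haveI := hfd X; haveI := hfd Y; haveI := hfd (X ⊗ Y)
    set bX := Module.Free.chooseBasis k (F.obj X) with hbX
    set bY := Module.Free.chooseBasis k (F.obj Y) with hbY
    simp only [LinearMap.comp_apply, LinearEquiv.coe_coe, TensorProduct.map_tmul]
    rw [hm X Y S T]
    have hD := LinearMap.congr_fun (hΔ (X ⊗ Y)) (sandwichL (F := F) X Y S T)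
    have hDX := LinearMap.congr_fun (hΔ X) S
    have hDY := LinearMap.congr_fun (hΔ Y) T
    simp only [LinearMap.comp_apply] at hD hDX hDY
    rw [hD, hDX, hDY]
    rw [comatrixComul_eq_basis (prodBasis bX bY) (sandwichL (F := F) X Y S T),
        comatrixComul_eq_basis bX S, comatrixComul_eq_basis bY T]
    have hE : ∀ (p q : _ × _), EEb (prodBasis bX bY) p q
        = sandwichL (F := F) X Y (EEb bX p.1 q.1) (EEb bY p.2 q.2) := by
      intro p q; rw [sandwichL_apply]; exact EEb_prodBasis bX bY p.1 q.1 p.2 q.2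
    have hEP : ∀ (p q : _ × _),
        EEb (prodBasis bX bY) q p ∘ₗ sandwichL (F := F) X Y S T
          = sandwichL (F := F) X Y (EEb bX q.1 p.1 ∘ₗ S) (EEb bY q.2 p.2 ∘ₗ T) := by
      intro p q; rw [hE q p, sandwichL_comp]
    simp only [hEP, hE]
    simp only [map_sum, TensorProduct.sum_tmul, TensorProduct.tmul_sum,
      TensorProduct.map_tmul, tensorTensorTensorComm_tmul, hm, sandwichL_comp]
    simp only [Fintype.sum_prod_type]
    conv_lhs => rw [Finset.sum_comm]
    refine Finset.sum_congr rfl fun b _ => ?_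
    conv_rhs => rw [Finset.sum_comm]
    refine Finset.sum_congr rfl fun a _ => ?_
    exact Finset.sum_comm
  · -- ε is multiplicative
    refine ext_gen2 hreal fun X Y S T => ?_
    haveI := hfd X; haveI := hfd Y
    simp only [LinearMap.comp_apply, LinearEquiv.coe_coe, TensorProduct.map_tmul]
    rw [hm X Y S T]
    have he1 := LinearMap.congr_fun (hε (X ⊗ Y)) (sandwichL (F := F) X Y S T)
    have he2 := LinearMap.congr_fun (hε X) S
    have he3 := LinearMap.congr_fun (hε Y) T
    simp only [LinearMap.comp_apply] at he1 he2 he3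
    rw [he1, he2, he3]
    have hconj : sandwichL (F := F) X Y S T
        = (μEquiv (F := F) X Y).conj (TensorProduct.map S T) := by
      rw [LinearEquiv.conj_apply, sandwichL_apply]
      rfl
    rw [hconj, LinearMap.trace_conj']
    have htr := LinearMap.congr_fun (LinearMap.congr_fun
      (LinearMap.trace_tensorProduct k (F.obj X) (F.obj Y)) S) T
    simp only [LinearMap.compr₂_apply, TensorProduct.mapBilinear_apply,
      LinearMap.compl₁₂_apply, LinearMap.lsmul_apply, smul_eq_mul] at htr
    rw [htr, TensorProduct.lid_tmul, smul_eq_mul]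
  · -- Δ of the unit
    haveI := hfd (𝟙_ C)
    have hεη : ((Functor.LaxMonoidal.ε F).hom : (𝟙_ (ModuleCat k) : ModuleCat k) →ₗ[k] F.obj (𝟙_ C)) ∘ₗ
        ((Functor.OplaxMonoidal.η F).hom : F.obj (𝟙_ C) →ₗ[k] (𝟙_ (ModuleCat k) : ModuleCat k)) = LinearMap.id :=
      congrArg ModuleCat.Hom.hom (Functor.Monoidal.η_ε (F := F))
    have hηε : ((Functor.OplaxMonoidal.η F).hom : F.obj (𝟙_ C) →ₗ[k] (𝟙_ (ModuleCat k) : ModuleCat k)) ∘ₗ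
        ((Functor.LaxMonoidal.ε F).hom : (𝟙_ (ModuleCat k) : ModuleCat k) →ₗ[k] F.obj (𝟙_ C)) = LinearMap.id :=
      congrArg ModuleCat.Hom.hom (Functor.Monoidal.ε_η (F := F))
    have e : k ≃ₗ[k] F.obj (𝟙_ C) :=
      LinearEquiv.ofLinear ((Functor.LaxMonoidal.ε F).hom : (𝟙_ (ModuleCat k) : ModuleCat k) →ₗ[k] F.obj (𝟙_ C))
        ((Functor.OplaxMonoidal.η F).hom : F.obj (𝟙_ C) →ₗ[k] (𝟙_ (ModuleCat k) : ModuleCat k)) hεη hηε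
    set cI : Module.Basis PUnit k (F.obj (𝟙_ C)) := (Module.Basis.singleton PUnit k).map e with hcI
    have hD := LinearMap.congr_fun (hΔ (𝟙_ C)) LinearMap.id
    simp only [LinearMap.comp_apply] at hD
    rw [hD, comatrixComul_eq_basis cI LinearMap.id]
    have hEE : EEb cI PUnit.unit PUnit.unit = LinearMap.id := by
      ext x
      rw [EEb_apply]
      have h := cI.sum_repr x
      simpa using h
    simp [hEE]
  · -- ε of the unit
    haveI := hfd (𝟙_ C)
    have he := LinearMap.congr_fun (hε (𝟙_ C)) LinearMap.id
    simp only [LinearMap.comp_apply] at he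
    rw [he, LinearMap.trace_id]
    have hεη : ((Functor.LaxMonoidal.ε F).hom : (𝟙_ (ModuleCat k) : ModuleCat k) →ₗ[k] F.obj (𝟙_ C)) ∘ₗ
        ((Functor.OplaxMonoidal.η F).hom : F.obj (𝟙_ C) →ₗ[k] (𝟙_ (ModuleCat k) : ModuleCat k)) = LinearMap.id :=
      congrArg ModuleCat.Hom.hom (Functor.Monoidal.η_ε (F := F))
    have hηε : ((Functor.OplaxMonoidal.η F).hom : F.obj (𝟙_ C) →ₗ[k] (𝟙_ (ModuleCat k) : ModuleCat k)) ∘ₗ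
        ((Functor.LaxMonoidal.ε F).hom : (𝟙_ (ModuleCat k) : ModuleCat k) →ₗ[k] F.obj (𝟙_ C)) = LinearMap.id :=
      congrArg ModuleCat.Hom.hom (Functor.Monoidal.ε_η (F := F))
    have e : k ≃ₗ[k] F.obj (𝟙_ C) :=
      LinearEquiv.ofLinear ((Functor.LaxMonoidal.ε F).hom : (𝟙_ (ModuleCat k) : ModuleCat k) →ₗ[k] F.obj (𝟙_ C))
        ((Functor.OplaxMonoidal.η F).hom : F.obj (𝟙_ C) →ₗ[k] (𝟙_ (ModuleCat k) : ModuleCat k)) hεη hηε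
    rw [show Module.finrank k (F.obj (𝟙_ C)) = 1 from by
      rw [← e.finrank_eq, Module.finrank_self]]
    exact Nat.cast_one
end
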